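/- Let A be a p×n complex matrix, W a nonzero n×p complex matrix, k = max{Ind(AW), Ind(WA)}, m a positive integer, and let X = A^{⊙_m,W} = A^{w_m,W}·P_{(WA)^m} be the W-weighted m-weak core inverse. Then X·W·(AW)^{k+1} = (AW)^k. -/
import Mathlib


open Matrix

/-- `P` is the orthogonal projector onto the subspace `S`. -/
def IsOrthProjOnto {p : ℕ} (P : Matrix (Fin p) (Fin p) ℂ)
    (S : Submodule ℂ (Fin p → ℂ)) : Prop :=
  P * P = P ∧ Pᴴ = P ∧ LinearMap.range P.mulVecLin = S

/-- `k` is the index of the square matrix `M`. -/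
def MatIndex {p : ℕ} (M : Matrix (Fin p) (Fin p) ℂ) (k : ℕ) : Prop :=
  (M ^ k).rank = (M ^ (k + 1)).rank ∧
    ∀ j, (M ^ j).rank = (M ^ (j + 1)).rank → k ≤ j

section Aux

lemma col_mem_range {q s : ℕ} (C : Matrix (Fin q) (Fin s) ℂ) (c : Fin s) :
    (fun x => C x c) ∈ LinearMap.range C.mulVecLin := by
  refine ⟨Pi.single c 1, ?_⟩
  ext x
  simp [Matrix.mulVecLin_apply, Matrix.mulVec, dotProduct, Pi.single_apply]

lemma exists_right_factor {q r s : ℕ} (B : Matrix (Fin q) (Fin r) ℂ)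
    (C : Matrix (Fin q) (Fin s) ℂ)
    (h : LinearMap.range C.mulVecLin ≤ LinearMap.range B.mulVecLin) :
    ∃ U : Matrix (Fin r) (Fin s) ℂ, C = B * U := by
  choose u hu using fun c => h (col_mem_range C c)
  refine ⟨Matrix.of (fun x c => u c x), ?_⟩
  ext x c
  have h1 := congrFun (hu c) x
  simp only [Matrix.mulVecLin_apply, Matrix.mulVec, dotProduct] at h1
  simp [Matrix.mul_apply, ← h1]

lemma mul_cancel_of_ker_le {q s a b : ℕ} (B : Matrix (Fin a) (Fin q) ℂ)
    (C : Matrix (Fin b) (Fin q) ℂ)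
    (h : LinearMap.ker B.mulVecLin ≤ LinearMap.ker C.mulVecLin)
    (F : Matrix (Fin q) (Fin s) ℂ) (hF : B * F = 0) : C * F = 0 := by
  ext x c
  have hmem : (fun y => F y c) ∈ LinearMap.ker B.mulVecLin := by
    rw [LinearMap.mem_ker]
    ext r
    have h2 := congrFun (congrFun hF r) c
    simpa [Matrix.mul_apply, Matrix.mulVecLin_apply, Matrix.mulVec, dotProduct] using h2
  have h3 := h hmem
  rw [LinearMap.mem_ker] at h3
  have h4 := congrFun h3 x
  simpa [Matrix.mulVecLin_apply, Matrix.mulVec, dotProduct, Matrix.mul_apply] using h4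

lemma range_pow_stab {q : ℕ} (M : Matrix (Fin q) (Fin q) ℂ) (c : ℕ)
    (h : (M ^ c).rank = (M ^ (c + 1)).rank) :
    ∀ j, c ≤ j →
      LinearMap.range ((M ^ j).mulVecLin) = LinearMap.range ((M ^ c).mulVecLin) := by
  have hle : LinearMap.range ((M ^ (c + 1)).mulVecLin) ≤
      LinearMap.range ((M ^ c).mulVecLin) := by
    rw [pow_succ, Matrix.mulVecLin_mul]
    exact LinearMap.range_comp_le_range _ _
  have hstep : LinearMap.range ((M ^ (c + 1)).mulVecLin) =
      LinearMap.range ((M ^ c).mulVecLin) :=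
    Submodule.eq_of_le_of_finrank_eq hle h.symm
  intro j hj
  induction j, hj using Nat.le_induction with
  | base => rfl
  | succ j hj ih =>
    have hmap : LinearMap.range ((M ^ (j + 1)).mulVecLin) =
        Submodule.map M.mulVecLin (LinearMap.range ((M ^ j).mulVecLin)) := by
      rw [pow_succ', Matrix.mulVecLin_mul, LinearMap.range_comp]
    rw [hmap, ih, ← LinearMap.range_comp, ← Matrix.mulVecLin_mul, ← pow_succ', hstep]

lemma ker_pow_stab {q : ℕ} (M : Matrix (Fin q) (Fin q) ℂ) (c : ℕ)
    (h : (M ^ c).rank = (M ^ (c + 1)).rank) :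
    ∀ j, c ≤ j →
      LinearMap.ker ((M ^ j).mulVecLin) = LinearMap.ker ((M ^ c).mulVecLin) := by
  intro j hj
  have hranges : LinearMap.range ((M ^ j).mulVecLin) =
      LinearMap.range ((M ^ c).mulVecLin) := range_pow_stab M c h j hj
  have hle : LinearMap.ker ((M ^ c).mulVecLin) ≤ LinearMap.ker ((M ^ j).mulVecLin) := by
    intro x hx
    rw [LinearMap.mem_ker] at hx ⊢
    have hsplit : M ^ j = M ^ (j - c) * M ^ c := by
      rw [← pow_add]
      congr 1
      omega
    rw [hsplit, Matrix.mulVecLin_mul]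
    simp [LinearMap.comp_apply, hx]
  refine (Submodule.eq_of_le_of_finrank_eq hle ?_).symm
  have h1 := LinearMap.finrank_range_add_finrank_ker ((M ^ c).mulVecLin)
  have h2 := LinearMap.finrank_range_add_finrank_ker ((M ^ j).mulVecLin)
  have h3 : Module.finrank ℂ (LinearMap.range ((M ^ j).mulVecLin)) =
      Module.finrank ℂ (LinearMap.range ((M ^ c).mulVecLin)) := by rw [hranges]
  omega

lemma comm_pow {p n : ℕ} (A : Matrix (Fin p) (Fin n) ℂ) (W : Matrix (Fin n) (Fin p) ℂ)
    (j : ℕ) : A * (W * A) ^ j = (A * W) ^ j * A := by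
  induction j with
  | zero => simp
  | succ j ih =>
    rw [pow_succ, pow_succ, ← Matrix.mul_assoc, ih]
    simp only [Matrix.mul_assoc]

end Aux

theorem stmt_9 {p n : ℕ} (A : Matrix (Fin p) (Fin n) ℂ)
    (W : Matrix (Fin n) (Fin p) ℂ) (hW : W ≠ 0)
    (k₁ k₂ k m : ℕ) (hm : 0 < m)
    (hk₁ : MatIndex (A * W) k₁) (hk₂ : MatIndex (W * A) k₂)
    (hk : k = max k₁ k₂)
    -- `Pk` is the orthogonal projector onto range((WA)^k)
    (Pk : Matrix (Fin n) (Fin n) ℂ)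
    (hPk : IsOrthProjOnto Pk (LinearMap.range ((W * A) ^ k).mulVecLin))
    -- `Z` is the W-weighted core-EP inverse of `A`
    (Z : Matrix (Fin p) (Fin n) ℂ)
    (hZ1 : W * A * W * Z = Pk)
    (hZ2 : LinearMap.range Z.mulVecLin ≤ LinearMap.range ((A * W) ^ k).mulVecLin)
    -- `G` is the W-weighted m-weak group inverse of `A`
    (G : Matrix (Fin p) (Fin n) ℂ)
    (hG1 : A * W * G = (Z * W) ^ m * (A * W) ^ (m - 1) * A)
    (hG2 : A * W * G * W * G = G)
    -- `P` is the orthogonal projector onto range((WA)^m)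
    (P : Matrix (Fin n) (Fin n) ℂ)
    (hP : IsOrthProjOnto P (LinearMap.range ((W * A) ^ m).mulVecLin))
    -- `X` is the W-weighted m-weak core inverse of `A`
    (X : Matrix (Fin p) (Fin n) ℂ) (hX : X = G * P) :
    X * W * (A * W) ^ (k + 1) = (A * W) ^ k := by
  have hk₁k : k₁ ≤ k := by rw [hk]; exact le_max_left _ _
  have hk₂k : k₂ ≤ k := by rw [hk]; exact le_max_right _ _
  have hWpow : ∀ j : ℕ, W * (A * W) ^ j = (W * A) ^ j * W := fun j => comm_pow W A j
  have hApow : ∀ j : ℕ, A * (W * A) ^ j = (A * W) ^ j * A := fun j => comm_pow A W j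
  -- Step A : P fixes (W*A)^(k+1)
  have hrangeT : LinearMap.range (((W * A) ^ (k + 1)).mulVecLin) ≤
      LinearMap.range (((W * A) ^ m).mulVecLin) := by
    rcases le_or_gt m (k + 1) with hmk | hmk
    · have hs : (W * A) ^ (k + 1) = (W * A) ^ m * (W * A) ^ (k + 1 - m) := by
        rw [← pow_add]
        congr 1
        omega
      rw [hs, Matrix.mulVecLin_mul]
      exact LinearMap.range_comp_le_range _ _
    · have h1 := range_pow_stab (W * A) k₂ hk₂.1 (k + 1) (by omega)
      have h2 := range_pow_stab (W * A) k₂ hk₂.1 m (by omega)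
      exact le_of_eq (h1.trans h2.symm)
  obtain ⟨U₂, hU₂⟩ := exists_right_factor P ((W * A) ^ (k + 1))
    (le_trans hrangeT hP.2.2.ge)
  have hPfix : P * (W * A) ^ (k + 1) = (W * A) ^ (k + 1) := by
    rw [hU₂, ← Matrix.mul_assoc, hP.1]
  -- Step B : Pk fixes (W*A)^k
  obtain ⟨U₃, hU₃⟩ := exists_right_factor Pk ((W * A) ^ k) hPk.2.2.ge
  have hPkfix : Pk * (W * A) ^ k = (W * A) ^ k := by
    rw [hU₃, ← Matrix.mul_assoc, hPk.1]
  -- Z = (A*W)^k * U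
  obtain ⟨U, hU⟩ := exists_right_factor ((A * W) ^ k) Z hZ2
  -- the "star" identity : S² Z W S^k = S^(k+1)
  have hstar : (A * W) * ((A * W) * (Z * (W * (A * W) ^ k))) = (A * W) ^ (k + 1) := by
    have h0 : (A * W) ^ (k + 1) = A * ((W * A) ^ k * W) := by
      rw [pow_succ, ← Matrix.mul_assoc, ← hApow k, Matrix.mul_assoc]
    rw [h0, ← hPkfix, ← hZ1]
    simp only [Matrix.mul_assoc, hWpow k]
  have hstar2 : (A * W) * ((A * W) * (Z * (W * (A * W) ^ (k + 1)))) = (A * W) ^ (k + 2) := by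
    calc (A * W) * ((A * W) * (Z * (W * (A * W) ^ (k + 1))))
        = ((A * W) * ((A * W) * (Z * (W * (A * W) ^ k)))) * (A * W) := by
          rw [show (A * W) ^ (k + 1) = (A * W) ^ k * (A * W) from pow_succ _ _]
          simp only [Matrix.mul_assoc]
      _ = (A * W) ^ (k + 1) * (A * W) := by rw [hstar]
      _ = (A * W) ^ (k + 2) := by rw [← pow_succ]
  have hstar3 : (A * W) ^ (k + 2) * (U * (W * (A * W) ^ (k + 1))) = (A * W) ^ (k + 2) := by
    calc (A * W) ^ (k + 2) * (U * (W * (A * W) ^ (k + 1)))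
        = (A * W) * ((A * W) * (((A * W) ^ k * U) * (W * (A * W) ^ (k + 1)))) := by
          rw [show (A * W) ^ (k + 2) = (A * W) * ((A * W) * (A * W) ^ k) from by
            rw [show k + 2 = 1 + (1 + k) from by omega, pow_add, pow_add, pow_one]]
          simp only [Matrix.mul_assoc]
      _ = (A * W) * ((A * W) * (Z * (W * (A * W) ^ (k + 1)))) := by rw [← hU]
      _ = (A * W) ^ (k + 2) := hstar2
  have hzero : (A * W) ^ (k + 2) * (U * (W * (A * W) ^ (k + 1)) - 1) = 0 := by
    rw [Matrix.mul_sub, Matrix.mul_one, hstar3, sub_self]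
  have hker : LinearMap.ker (((A * W) ^ (k + 2)).mulVecLin) ≤
      LinearMap.ker (((A * W) ^ k).mulVecLin) :=
    le_of_eq ((ker_pow_stab (A * W) k₁ hk₁.1 (k + 2) (by omega)).trans
      (ker_pow_stab (A * W) k₁ hk₁.1 k (by omega)).symm)
  have hcancel : (A * W) ^ k * (U * (W * (A * W) ^ (k + 1)) - 1) = 0 :=
    mul_cancel_of_ker_le _ _ hker _ hzero
  have hcancel' : (A * W) ^ k * (U * (W * (A * W) ^ (k + 1))) = (A * W) ^ k := by
    rw [Matrix.mul_sub, Matrix.mul_one, sub_eq_zero] at hcancel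
    exact hcancel
  have claimA : Z * (W * (A * W) ^ (k + 1)) = (A * W) ^ k := by
    rw [hU, Matrix.mul_assoc]
    exact hcancel'
  have claimA' : ∀ j, k ≤ j → Z * (W * (A * W) ^ (j + 1)) = (A * W) ^ j := by
    intro j hj
    have hsplit : (A * W) ^ (j + 1) = (A * W) ^ (k + 1) * (A * W) ^ (j - k) := by
      rw [← pow_add]
      congr 1
      omega
    rw [hsplit]
    calc Z * (W * ((A * W) ^ (k + 1) * (A * W) ^ (j - k)))
        = (Z * (W * (A * W) ^ (k + 1))) * (A * W) ^ (j - k) := by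
          simp only [Matrix.mul_assoc]
      _ = (A * W) ^ k * (A * W) ^ (j - k) := by rw [claimA]
      _ = (A * W) ^ j := by rw [← pow_add, show k + (j - k) = j from by omega]
  have iter : ∀ i j, k ≤ j → (Z * W) ^ i * (A * W) ^ (i + j) = (A * W) ^ j := by
    intro i
    induction i with
    | zero => intro j hj; simp
    | succ i ih =>
      intro j hj
      calc (Z * W) ^ (i + 1) * (A * W) ^ (i + 1 + j)
          = (Z * W) ^ i * (Z * (W * (A * W) ^ (i + j + 1))) := by
            rw [pow_succ, show i + 1 + j = i + j + 1 from by omega]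
            simp only [Matrix.mul_assoc]
        _ = (Z * W) ^ i * (A * W) ^ (i + j) := by rw [claimA' (i + j) (by omega)]
        _ = (A * W) ^ j := ih j hj
  have hGm : G = (Z * W) ^ m * ((A * W) ^ m * G) := by
    calc G = A * W * G * W * G := hG2.symm
      _ = ((Z * W) ^ m * (A * W) ^ (m - 1) * A) * W * G := by rw [hG1]
      _ = (Z * W) ^ m * (((A * W) ^ (m - 1) * (A * W)) * G) := by
          simp only [Matrix.mul_assoc]
      _ = (Z * W) ^ m * ((A * W) ^ m * G) := by
          rw [← pow_succ, show m - 1 + 1 = m from by omega]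
  have hSG : (A * W) * (G * (W * (A * W) ^ (k + 1))) = (A * W) ^ (k + 1) := by
    calc (A * W) * (G * (W * (A * W) ^ (k + 1)))
        = ((Z * W) ^ m * (A * W) ^ (m - 1) * A) * (W * (A * W) ^ (k + 1)) := by
          rw [← Matrix.mul_assoc, hG1]
      _ = (Z * W) ^ m * ((A * W) ^ (m - 1) * ((A * W) * (A * W) ^ (k + 1))) := by
          simp only [Matrix.mul_assoc]
      _ = (Z * W) ^ m * (A * W) ^ (m + (k + 1)) := by
          rw [← pow_succ', ← pow_add, show m - 1 + (k + 1 + 1) = m + (k + 1) from by omega]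
      _ = (A * W) ^ (k + 1) := iter m (k + 1) (by omega)
  have hfinal : G * (W * (A * W) ^ (k + 1)) = (A * W) ^ k := by
    calc G * (W * (A * W) ^ (k + 1))
        = ((Z * W) ^ m * ((A * W) ^ m * G)) * (W * (A * W) ^ (k + 1)) := by
          conv_lhs => rw [hGm]
      _ = (Z * W) ^ m * ((A * W) ^ (m - 1) * ((A * W) * (G * (W * (A * W) ^ (k + 1))))) := by
          rw [show (A * W) ^ m = (A * W) ^ (m - 1) * (A * W) from by
            rw [← pow_succ, show m - 1 + 1 = m from by omega]]
          simp only [Matrix.mul_assoc]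
      _ = (Z * W) ^ m * ((A * W) ^ (m - 1) * (A * W) ^ (k + 1)) := by rw [hSG]
      _ = (Z * W) ^ m * (A * W) ^ (m + k) := by
          rw [← pow_add, show m - 1 + (k + 1) = m + k from by omega]
      _ = (A * W) ^ k := iter m k le_rfl
  have hPW : P * (W * (A * W) ^ (k + 1)) = W * (A * W) ^ (k + 1) := by
    rw [hWpow (k + 1), ← Matrix.mul_assoc, hPfix]
  rw [hX]
  calc G * P * W * (A * W) ^ (k + 1)
      = G * (P * (W * (A * W) ^ (k + 1))) := by simp only [Matrix.mul_assoc]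
    _ = G * (W * (A * W) ^ (k + 1)) := by rw [hPW]
    _ = (A * W) ^ k := hfinal
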